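/- Let m be odd. The binary Kerdock code of length 2^{m+1} (the Gray image of the Z_4-linear Kerdock code K(m)) has weight distribution: A_0 = A_{2^{m+1}} = 1, A_{2^m} = 2^{m+2} − 2, and A_{2^m ± 2^{(m−1)/2}} = 2^{2m+1} − 2^{m+1} each, with all other A_i = 0. -/

import Mathlib

open Matrix BigOperators

namespace KerdockAux

/-! ### ZMod 2 → ZMod 4 lift and the quaternary character -/

def l (a : ZMod 2) : ZMod 4 := (a.val : ZMod 4)
lemma l_add : ∀ a b : ZMod 2, l (a + b) = l a + l b - 2 * l a * l b := by decide
lemma l_mul : ∀ a b : ZMod 2, l (a * b) = l a * l b := by decide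

def tl : ZMod 2 →+ ZMod 4 where
  toFun a := 2 * l a
  map_zero' := by decide
  map_add' := by decide
lemma tl_apply (a : ZMod 2) : tl a = 2 * l a := rfl
lemma tl_inj : ∀ a b : ZMod 2, tl a = tl b → a = b := by decide

def χ (v : ZMod 4) : GaussianInt := (⟨0,1⟩ : GaussianInt) ^ v.val
lemma χ_add : ∀ a b : ZMod 4, χ (a + b) = χ a * χ b := by decide
lemma star_χ : ∀ a : ZMod 4, star (χ a) = χ (-a) := by decide
lemma χ_zero : χ 0 = 1 := by decide

lemma zmod4_sum {M : Type*} [AddCommMonoid M] (f : ZMod 4 → M) :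
    ∑ κ : ZMod 4, f κ = f 0 + f 1 + f 2 + f 3 := by
  have h : (Finset.univ : Finset (ZMod 4)) = {0, 1, 2, 3} := by decide
  rw [h, Finset.sum_insert (by decide), Finset.sum_insert (by decide),
    Finset.sum_insert (by decide), Finset.sum_singleton]
  abel

lemma re_χ0 (S : GaussianInt) : (S * χ 0).re = S.re := by
  have h : χ 0 = 1 := by decide
  rw [h, mul_one]
lemma re_χ1 (S : GaussianInt) : (S * χ 1).re = -S.im := by
  have h : χ 1 = ⟨0, 1⟩ := by decide
  rw [h, Zsqrtd.re_mul]; ring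
lemma re_χ2 (S : GaussianInt) : (S * χ 2).re = -S.re := by
  have h : χ 2 = ⟨-1, 0⟩ := by decide
  rw [h, Zsqrtd.re_mul]; ring
lemma re_χ3 (S : GaussianInt) : (S * χ 3).re = S.im := by
  have h : χ 3 = ⟨0, -1⟩ := by decide
  rw [h, Zsqrtd.re_mul]; ring

def reHom : GaussianInt →+ ℤ where
  toFun := Zsqrtd.re
  map_zero' := rfl
  map_add' _ _ := rfl
lemma reHom_apply (S : GaussianInt) : reHom S = S.re := rfl

/-! ### The Z4-valued quadratic form -/

def QQ {m : ℕ} (P : Matrix (Fin m) (Fin m) (ZMod 2)) (x : Fin m → ZMod 2) : ZMod 4 :=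
  ((∑ i, ∑ j, (x i).val * (P i j).val * (x j).val : ℕ) : ZMod 4)

lemma QQ_eq {m : ℕ} (P : Matrix (Fin m) (Fin m) (ZMod 2)) (x : Fin m → ZMod 2) :
    QQ P x = ∑ i, ∑ j, l (x i) * l (P i j) * l (x j) := by
  simp [QQ, l]

lemma QQ_add {m : ℕ} (P : Matrix (Fin m) (Fin m) (ZMod 2)) (hP : ∀ i j, P i j = P j i)
    (x u : Fin m → ZMod 2) :
    QQ P (x + u) = QQ P x + QQ P u + 2 * l (∑ i, ∑ j, x i * P i j * u j) := by
  have h4 : (4 : ZMod 4) = 0 := by decide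
  have hbil : 2 * l (∑ i, ∑ j, x i * P i j * u j)
      = ∑ i, ∑ j, 2 * (l (x i) * l (P i j) * l (u j)) := by
    rw [← tl_apply, map_sum]
    refine Finset.sum_congr rfl fun i _ => ?_
    rw [map_sum]
    refine Finset.sum_congr rfl fun j _ => ?_
    rw [tl_apply, l_mul, l_mul]
  rw [QQ_eq, QQ_eq, QQ_eq, hbil]
  have key : ∀ i j : Fin m, l ((x + u) i) * l (P i j) * l ((x + u) j)
      = (l (x i) * l (P i j) * l (x j) + l (u i) * l (P i j) * l (u j)
        + (l (x i) * l (P i j) * l (u j) + l (u i) * l (P i j) * l (x j)))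
        - (2 * ((l (x i) + l (u i)) * l (P i j) * (l (x j) * l (u j)))
           + 2 * ((l (x i) * l (u i)) * l (P i j) * (l (x j) + l (u j)))) := by
    intro i j
    simp only [Pi.add_apply, l_add]
    linear_combination (l (x i) * l (u i) * l (x j) * l (u j) * l (P i j)) * h4
  have expand : ∑ i, ∑ j, l ((x + u) i) * l (P i j) * l ((x + u) j)
      = ((∑ i, ∑ j, l (x i) * l (P i j) * l (x j))
          + (∑ i, ∑ j, l (u i) * l (P i j) * l (u j))
          + ((∑ i, ∑ j, l (x i) * l (P i j) * l (u j))
            + (∑ i, ∑ j, l (u i) * l (P i j) * l (x j))))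
        - ((∑ i, ∑ j, 2 * ((l (x i) + l (u i)) * l (P i j) * (l (x j) * l (u j))))
          + (∑ i, ∑ j, 2 * ((l (x i) * l (u i)) * l (P i j) * (l (x j) + l (u j))))) := by
    simp only [key, Finset.sum_sub_distrib, Finset.sum_add_distrib]
  rw [expand]
  have sw1 : (∑ i, ∑ j, l (u i) * l (P i j) * l (x j))
      = ∑ i, ∑ j, l (x i) * l (P i j) * l (u j) := by
    rw [Finset.sum_comm]
    refine Finset.sum_congr rfl fun j _ => Finset.sum_congr rfl fun i _ => ?_
    rw [hP i j]; ring
  have sw2 : (∑ i, ∑ j, 2 * ((l (x i) + l (u i)) * l (P i j) * (l (x j) * l (u j))))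
      = ∑ i, ∑ j, 2 * ((l (x i) * l (u i)) * l (P i j) * (l (x j) + l (u j))) := by
    rw [Finset.sum_comm]
    refine Finset.sum_congr rfl fun j _ => Finset.sum_congr rfl fun i _ => ?_
    rw [hP i j]; ring
  rw [sw1, sw2]
  have hz : (∑ i, ∑ j, 2 * ((l (x i) * l (u i)) * l (P i j) * (l (x j) + l (u j))))
      + (∑ i, ∑ j, 2 * ((l (x i) * l (u i)) * l (P i j) * (l (x j) + l (u j)))) = 0 := by
    rw [← Finset.sum_add_distrib]
    refine Finset.sum_eq_zero fun i _ => ?_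
    rw [← Finset.sum_add_distrib]
    refine Finset.sum_eq_zero fun j _ => ?_
    linear_combination ((l (x i) * l (u i)) * l (P i j) * (l (x j) + l (u j))) * h4
  have hc : (∑ i, ∑ j, l (x i) * l (P i j) * l (u j))
      + (∑ i, ∑ j, l (x i) * l (P i j) * l (u j))
      = ∑ i, ∑ j, 2 * (l (x i) * l (P i j) * l (u j)) := by
    rw [← Finset.sum_add_distrib]
    refine Finset.sum_congr rfl fun i _ => ?_
    rw [← Finset.sum_add_distrib]
    refine Finset.sum_congr rfl fun j _ => ?_
    ring
  rw [hz, sub_zero, ← hc]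

lemma QQ_zero {m : ℕ} (P : Matrix (Fin m) (Fin m) (ZMod 2)) : QQ P 0 = 0 := by
  simp [QQ]

lemma QQ_of_zero_matrix {m : ℕ} (P : Matrix (Fin m) (Fin m) (ZMod 2))
    (hP : ∀ i j, P i j = 0) (x : Fin m → ZMod 2) : QQ P x = 0 := by
  have : ∀ i j, (P i j).val = 0 := fun i j => by rw [hP]; rfl
  simp [QQ, this]

/-! ### character sums -/

lemma sum_char_eq_zero {m : ℕ} (φ : (Fin m → ZMod 2) → ZMod 2)
    (hadd : ∀ x y, φ (x + y) = φ x + φ y) (x₀ : Fin m → ZMod 2) (h0 : φ x₀ ≠ 0) :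
    ∑ y : Fin m → ZMod 2, χ (tl (φ y)) = 0 := by
  have h1 : φ x₀ = 1 := by
    have h : ∀ a : ZMod 2, a ≠ 0 → a = 1 := by decide
    exact h _ h0
  have hre : ∑ y : Fin m → ZMod 2, χ (tl (φ (x₀ + y)))
      = ∑ y : Fin m → ZMod 2, χ (tl (φ y)) :=
    Fintype.sum_equiv (Equiv.addLeft x₀) _ _ (fun y => rfl)
  have key : ∀ y, χ (tl (φ (x₀ + y))) = - χ (tl (φ y)) := by
    intro y
    rw [hadd, h1]
    have h : ∀ a : ZMod 2, χ (tl (1 + a)) = - χ (tl a) := by decide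
    exact h _
  simp only [key] at hre
  rw [Finset.sum_neg_distrib] at hre
  have h2 : (2 : GaussianInt) * (∑ y : Fin m → ZMod 2, χ (tl (φ y))) = 0 := by
    rw [two_mul]
    nth_rewrite 1 [← hre]
    exact neg_add_cancel _
  rcases mul_eq_zero.mp h2 with h | h
  · exact absurd h (by decide)
  · exact h

lemma gauss_norm {m : ℕ} (d : (Fin m → ZMod 2) → ZMod 4)
    (B : (Fin m → ZMod 2) → (Fin m → ZMod 2) → ZMod 2)
    (hd0 : d 0 = 0)
    (hd : ∀ y u, d (y + u) = d y + d u + tl (B u y))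
    (hBadd : ∀ u y y', B u (y + y') = B u y + B u y')
    (hB0 : ∀ y, B 0 y = 0)
    (hBne : ∀ u, u ≠ 0 → ∃ y, B u y ≠ 0) :
    (∑ x : Fin m → ZMod 2, χ (d x)) * star (∑ x : Fin m → ZMod 2, χ (d x))
      = ((2 ^ m : ℕ) : GaussianInt) := by
  have expand : (∑ x : Fin m → ZMod 2, χ (d x)) * star (∑ x : Fin m → ZMod 2, χ (d x))
      = ∑ y : Fin m → ZMod 2, ∑ x : Fin m → ZMod 2, χ (d x) * χ (- d y) := by
    rw [star_sum, Finset.sum_mul_sum, Finset.sum_comm]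
    exact Finset.sum_congr rfl fun y _ => Finset.sum_congr rfl fun x _ => by rw [star_χ]
  rw [expand]
  have step : ∀ y : Fin m → ZMod 2, (∑ x : Fin m → ZMod 2, χ (d x) * χ (- d y))
      = ∑ u : Fin m → ZMod 2, χ (d u) * χ (tl (B u y)) := by
    intro y
    rw [← Equiv.sum_comp (Equiv.addLeft y) (fun x => χ (d x) * χ (- d y))]
    simp only [Equiv.coe_addLeft]
    refine Finset.sum_congr rfl fun u _ => ?_
    show χ (d (y + u)) * χ (- d y) = χ (d u) * χ (tl (B u y))
    rw [hd, ← χ_add, ← χ_add]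
    congr 1
    ring
  simp only [step]
  rw [Finset.sum_comm]
  rw [Finset.sum_eq_single (0 : Fin m → ZMod 2)]
  · rw [hd0, χ_zero]
    have h : ∀ y : Fin m → ZMod 2, χ (tl (B 0 y)) = 1 := by
      intro y; rw [hB0, map_zero, χ_zero]
    simp only [h, one_mul, Finset.sum_const, Finset.card_univ]
    simp [Fintype.card_fun]
  · intro u _ hu
    obtain ⟨y₀, hy₀⟩ := hBne u hu
    rw [← Finset.mul_sum]
    rw [sum_char_eq_zero (fun x => B u x) (fun a b => hBadd u a b) y₀ hy₀, mul_zero]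
  · intro h; exact absurd (Finset.mem_univ _) h

/-! ### sums of two squares equal to an odd power of two -/

lemma two_squares_pow (k : ℕ) : ∀ a b : ℤ, a ^ 2 + b ^ 2 = 2 ^ (2 * k + 1) →
    (a = 2 ^ k ∨ a = -2 ^ k) ∧ (b = 2 ^ k ∨ b = -2 ^ k) := by
  induction k with
  | zero =>
    intro a b h
    norm_num at h
    simp only [pow_zero]
    have ha : a ^ 2 ≤ 2 := by nlinarith [sq_nonneg b]
    have hb : b ^ 2 ≤ 2 := by nlinarith [sq_nonneg a]
    have ha1 : -1 ≤ a ∧ a ≤ 1 := by constructor <;> nlinarith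
    have hb1 : -1 ≤ b ∧ b ≤ 1 := by constructor <;> nlinarith
    obtain ⟨h1, h2⟩ := ha1; obtain ⟨h3, h4⟩ := hb1
    interval_cases a <;> interval_cases b <;> omega
  | succ k ih =>
    intro a b h
    have hae : Even a ∧ Even b := by
      rcases Int.even_or_odd a with ha | ha
      · rcases Int.even_or_odd b with hb | hb
        · exact ⟨ha, hb⟩
        · exfalso
          obtain ⟨c, hc⟩ := ha; obtain ⟨d, hd⟩ := hb
          subst hc; subst hd
          have hp : (2:ℤ) ^ (2 * (k+1) + 1) = 4 * 2 ^ (2 * k + 1) := by ring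
          rw [hp] at h
          have h2 : 4 * (c * c) + (4 * (d * d) + 4 * d) + 1 = 4 * 2 ^ (2*k+1) := by
            ring_nf; ring_nf at h; linarith
          omega
      · exfalso
        obtain ⟨c, hc⟩ := ha
        rcases Int.even_or_odd b with hb | hb
        · obtain ⟨d, hd⟩ := hb
          subst hc; subst hd
          have hp : (2:ℤ) ^ (2 * (k+1) + 1) = 4 * 2 ^ (2 * k + 1) := by ring
          rw [hp] at h
          have h2 : 4 * (c * c) + 4 * c + 4 * (d * d) + 1 = 4 * 2 ^ (2*k+1) := by
            ring_nf; ring_nf at h; linarith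
          omega
        · obtain ⟨d, hd⟩ := hb
          subst hc; subst hd
          have hp : (2:ℤ) ^ (2 * (k+1) + 1) = 4 * 2 ^ (2 * k + 1) := by ring
          rw [hp] at h
          have h2 : (4 * (c * c) + 4 * c) + (4 * (d * d) + 4 * d) + 2 = 4 * 2 ^ (2*k+1) := by
            ring_nf; ring_nf at h; linarith
          omega
    obtain ⟨⟨c, hc⟩, ⟨d, hd⟩⟩ := hae
    subst hc; subst hd
    have h' : c ^ 2 + d ^ 2 = 2 ^ (2 * k + 1) := by
      have hp : (2:ℤ) ^ (2 * (k+1) + 1) = 4 * 2 ^ (2 * k + 1) := by ring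
      rw [hp] at h
      nlinarith
    obtain ⟨h1, h2⟩ := ih c d h'
    constructor
    · rcases h1 with h1 | h1 <;> [left; right] <;> (subst h1; ring)
    · rcases h2 with h2 | h2 <;> [left; right] <;> (subst h2; ring)

/-! ### the field layer -/

variable {m : ℕ} {F : Type} [Field F] [Algebra (ZMod 2) F]

def X (α : F) (v : Fin m → ZMod 2) : F := ∑ i, v i • α ^ (i : ℕ)

lemma X_eq_equivFun (α : F) (bas : Module.Basis (Fin m) (ZMod 2) F)
    (hbas : ∀ i : Fin m, bas i = α ^ (i : ℕ)) (v : Fin m → ZMod 2) :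
    X α v = bas.equivFun.symm v := by
  rw [Module.Basis.equivFun_symm_apply]
  exact Finset.sum_congr rfl fun i _ => by rw [hbas]

lemma X_inj (α : F) (bas : Module.Basis (Fin m) (ZMod 2) F)
    (hbas : ∀ i : Fin m, bas i = α ^ (i : ℕ)) : Function.Injective (X (m := m) α) := by
  intro a b h
  rw [X_eq_equivFun α bas hbas, X_eq_equivFun α bas hbas] at h
  exact bas.equivFun.symm.injective h

lemma X_surj (α : F) (bas : Module.Basis (Fin m) (ZMod 2) F)
    (hbas : ∀ i : Fin m, bas i = α ^ (i : ℕ)) : Function.Surjective (X (m := m) α) := by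
  intro c
  obtain ⟨v, hv⟩ := bas.equivFun.symm.surjective c
  exact ⟨v, by rw [X_eq_equivFun α bas hbas, hv]⟩

lemma X_add (α : F) (x u : Fin m → ZMod 2) : X α (x + u) = X α x + X α u := by
  simp [X, add_smul, Finset.sum_add_distrib]

lemma X_zero (α : F) : X α (0 : Fin m → ZMod 2) = 0 := by simp [X]

lemma row_Amul (α : F) (Amul : F → Matrix (Fin m) (Fin m) (ZMod 2))
    (hAmul : ∀ (w : F) (v : Fin m → ZMod 2),
      (∑ i, Matrix.vecMul v (Amul w) i • α ^ (i : ℕ)) = (∑ i, v i • α ^ (i : ℕ)) * w)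
    (z : F) (i : Fin m) :
    (∑ k, (Amul z) i k • α ^ (k : ℕ)) = α ^ (i : ℕ) * z := by
  have h := hAmul z (Pi.single i 1)
  rw [Matrix.single_one_vecMul] at h
  rw [show (∑ k, (Amul z) i k • α ^ (k : ℕ)) = ∑ k, (Amul z).row i k • α ^ (k : ℕ) from rfl, h]
  congr 1
  rw [Finset.sum_eq_single i]
  · simp
  · intro b _ hb; simp [Pi.single_apply, hb]
  · intro h; exact absurd (Finset.mem_univ _) h

lemma P_form (α : F) (W : Matrix (Fin m) (Fin m) (ZMod 2))
    (hW : ∀ i j, W i j = Algebra.trace (ZMod 2) F (α ^ (i : ℕ) * α ^ (j : ℕ)))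
    (Amul : F → Matrix (Fin m) (Fin m) (ZMod 2))
    (hAmul : ∀ (w : F) (v : Fin m → ZMod 2),
      (∑ i, Matrix.vecMul v (Amul w) i • α ^ (i : ℕ)) = (∑ i, v i • α ^ (i : ℕ)) * w)
    (z : F) (i j : Fin m) :
    (Amul z * W) i j = Algebra.trace (ZMod 2) F (z * (α ^ (i : ℕ) * α ^ (j : ℕ))) := by
  rw [Matrix.mul_apply]
  have h1 : ∀ k, (Amul z) i k * W k j
      = Algebra.trace (ZMod 2) F ((Amul z) i k • (α ^ (k : ℕ) * α ^ (j : ℕ))) := by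
    intro k
    rw [_root_.map_smul, hW, smul_eq_mul]
  simp only [h1]
  rw [← map_sum]
  congr 1
  have h2 : ∑ k, (Amul z) i k • (α ^ (k : ℕ) * α ^ (j : ℕ))
      = (∑ k, (Amul z) i k • α ^ (k : ℕ)) * α ^ (j : ℕ) := by
    rw [Finset.sum_mul]
    exact Finset.sum_congr rfl fun k _ => (smul_mul_assoc _ _ _).symm
  rw [h2, row_Amul α Amul hAmul]
  ring

lemma P_symm (α : F) (W : Matrix (Fin m) (Fin m) (ZMod 2))
    (hW : ∀ i j, W i j = Algebra.trace (ZMod 2) F (α ^ (i : ℕ) * α ^ (j : ℕ)))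
    (Amul : F → Matrix (Fin m) (Fin m) (ZMod 2))
    (hAmul : ∀ (w : F) (v : Fin m → ZMod 2),
      (∑ i, Matrix.vecMul v (Amul w) i • α ^ (i : ℕ)) = (∑ i, v i • α ^ (i : ℕ)) * w)
    (z : F) (i j : Fin m) : (Amul z * W) i j = (Amul z * W) j i := by
  rw [P_form α W hW Amul hAmul, P_form α W hW Amul hAmul]
  ring_nf

lemma bilin (α : F) (W : Matrix (Fin m) (Fin m) (ZMod 2))
    (hW : ∀ i j, W i j = Algebra.trace (ZMod 2) F (α ^ (i : ℕ) * α ^ (j : ℕ)))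
    (Amul : F → Matrix (Fin m) (Fin m) (ZMod 2))
    (hAmul : ∀ (w : F) (v : Fin m → ZMod 2),
      (∑ i, Matrix.vecMul v (Amul w) i • α ^ (i : ℕ)) = (∑ i, v i • α ^ (i : ℕ)) * w)
    (z : F) (x u : Fin m → ZMod 2) :
    (∑ i, ∑ j, x i * (Amul z * W) i j * u j)
      = Algebra.trace (ZMod 2) F (z * X α x * X α u) := by
  have inner : ∀ i : Fin m, (∑ j, x i * (Amul z * W) i j * u j)
      = x i • Algebra.trace (ZMod 2) F (z * α ^ (i : ℕ) * X α u) := by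
    intro i
    have h1 : z * α ^ (i : ℕ) * X α u = ∑ j, u j • (z * (α ^ (i : ℕ) * α ^ (j : ℕ))) := by
      rw [X, Finset.mul_sum]
      exact Finset.sum_congr rfl fun j _ => by rw [mul_smul_comm]; ring_nf
    rw [h1, map_sum]
    rw [Finset.smul_sum]
    refine Finset.sum_congr rfl fun j _ => ?_
    rw [_root_.map_smul, P_form α W hW Amul hAmul]
    simp only [smul_eq_mul]
    ring
  simp only [inner]
  have h2 : z * X α x * X α u = ∑ i, x i • (z * α ^ (i : ℕ) * X α u) := by
    conv_lhs => rw [X]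
    rw [Finset.mul_sum, Finset.sum_mul]
    refine Finset.sum_congr rfl fun i _ => ?_
    rw [mul_smul_comm, smul_mul_assoc]
  rw [h2, map_sum]
  exact Finset.sum_congr rfl fun i _ => by rw [_root_.map_smul]

/-! ### the codeword function -/

def dfun {m : ℕ} (P : Matrix (Fin m) (Fin m) (ZMod 2)) (w x : Fin m → ZMod 2) : ZMod 4 :=
  QQ P x + tl (∑ i, w i * x i)

lemma dfun_zero {m : ℕ} (P : Matrix (Fin m) (Fin m) (ZMod 2)) (w : Fin m → ZMod 2) :
    dfun P w 0 = 0 := by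
  simp [dfun, QQ_zero]

lemma dfun_add {m : ℕ} (P : Matrix (Fin m) (Fin m) (ZMod 2)) (hP : ∀ i j, P i j = P j i)
    (w y u : Fin m → ZMod 2) :
    dfun P w (y + u) = dfun P w y + dfun P w u + tl (∑ i, ∑ j, y i * P i j * u j) := by
  rw [dfun, dfun, dfun, QQ_add P hP, ← tl_apply]
  have hw : (∑ i, w i * (y + u) i) = (∑ i, w i * y i) + (∑ i, w i * u i) := by
    rw [← Finset.sum_add_distrib]
    exact Finset.sum_congr rfl fun i _ => by rw [Pi.add_apply, mul_add]
  rw [hw, map_add]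
  abel

lemma cast_body {m : ℕ} (P : Matrix (Fin m) (Fin m) (ZMod 2)) (w x : Fin m → ZMod 2) :
    (((∑ i, ∑ j, (x i).val * (P i j).val * (x j).val)
        + 2 * ∑ i, (w i).val * (x i).val : ℕ) : ZMod 4)
      = dfun P w x := by
  rw [Nat.cast_add, dfun, QQ]
  congr 1
  have h1 : ((2 * ∑ i, (w i).val * (x i).val : ℕ) : ZMod 4)
      = ∑ i, 2 * (l (w i) * l (x i)) := by
    push_cast
    rw [Finset.mul_sum]
    rfl
  rw [h1, map_sum]
  refine Finset.sum_congr rfl fun i _ => ?_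
  rw [tl_apply, l_mul]

lemma wdot_single {m : ℕ} (w : Fin m → ZMod 2) (i : Fin m) :
    (∑ j, w j * (Pi.single i 1 : Fin m → ZMod 2) j) = w i := by
  rw [Finset.sum_eq_single i]
  · simp
  · intro b _ hb; simp [Pi.single_apply, hb]
  · intro h; exact absurd (Finset.mem_univ _) h

end KerdockAux

open KerdockAux

/-- Weight distribution of the binary Kerdock code of length `2^{m+1}` (`m` odd):
`A_0 = A_{2^{m+1}} = 1`, `A_{2^m} = 2^{m+2} - 2`,
`A_{2^m ± 2^{(m-1)/2}} = 2^{2m+1} - 2^{m+1}`, and all other `A_i = 0`. -/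
theorem kerdock_weight_distribution
    (m : ℕ) (hm : Odd m) (F : Type) [Field F] [Algebra (ZMod 2) F]
    (α : F) (bas : Module.Basis (Fin m) (ZMod 2) F)
    (hbas : ∀ i : Fin m, bas i = α ^ (i : ℕ))
    (hα : ∀ x : F, x ≠ 0 → ∃ k : ℕ, x = α ^ k)
    (W : Matrix (Fin m) (Fin m) (ZMod 2))
    (hW : ∀ i j, W i j = Algebra.trace (ZMod 2) F (α ^ (i : ℕ) * α ^ (j : ℕ)))
    (Amul : F → Matrix (Fin m) (Fin m) (ZMod 2))
    (hAmul : ∀ (w : F) (v : Fin m → ZMod 2),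
      (∑ i, Matrix.vecMul v (Amul w) i • α ^ (i : ℕ)) = (∑ i, v i • α ^ (i : ℕ)) * w)
    -- the Z₄-linear Kerdock code K(m)
    (K : Set ((Fin m → ZMod 2) → ZMod 4))
    (hK : K = {c | ∃ (z : F) (w : Fin m → ZMod 2) (κ : ZMod 4), c = fun x =>
      (((∑ i, ∑ j, (x i).val * ((Amul z * W) i j).val * (x j).val) +
          2 * ∑ i, (w i).val * (x i).val : ℕ) : ZMod 4) + κ})
    -- the Gray map
    (gray : ZMod 4 → ZMod 2 × ZMod 2)
    (hgray : gray 0 = (0, 0) ∧ gray 1 = (0, 1) ∧ gray 2 = (1, 1) ∧ gray 3 = (1, 0))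
    -- Hamming weight of the Gray image of a Z₄-valued codeword
    (wt : ((Fin m → ZMod 2) → ZMod 4) → ℕ)
    (hwt : ∀ c, wt c = ∑ x : Fin m → ZMod 2,
      ((if (gray (c x)).1 = 0 then 0 else 1) + (if (gray (c x)).2 = 0 then 0 else 1)))
    -- the weight distribution
    (Awt : ℕ → ℕ)
    (hAwt : ∀ i, Awt i = Nat.card {c : (Fin m → ZMod 2) → ZMod 4 // c ∈ K ∧ wt c = i}) :
    Awt 0 = 1 ∧
    Awt (2 ^ (m + 1)) = 1 ∧
    Awt (2 ^ m) = 2 ^ (m + 2) - 2 ∧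
    Awt (2 ^ m - 2 ^ ((m - 1) / 2)) = 2 ^ (2 * m + 1) - 2 ^ (m + 1) ∧
    Awt (2 ^ m + 2 ^ ((m - 1) / 2)) = 2 ^ (2 * m + 1) - 2 ^ (m + 1) ∧
    (∀ i : ℕ, i ≠ 0 → i ≠ 2 ^ (m + 1) → i ≠ 2 ^ m →
      i ≠ 2 ^ m - 2 ^ ((m - 1) / 2) → i ≠ 2 ^ m + 2 ^ ((m - 1) / 2) → Awt i = 0) := by
  classical
  obtain ⟨k, hk⟩ := hm
  have hkm : (m - 1) / 2 = k := by omega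
  rw [hkm]
  letI : Fintype F := Module.fintypeOfFintype bas
  haveI : Module.Finite (ZMod 2) F := Module.Finite.of_basis bas
  obtain ⟨c₀, hc₀⟩ := Algebra.trace_surjective (ZMod 2) F 1
  have hcardF : Fintype.card F = 2 ^ m := by
    rw [Module.card_fintype bas, ZMod.card, Fintype.card_fin]
  have hcardV : Fintype.card (Fin m → ZMod 2) = 2 ^ m := by
    rw [Fintype.card_fun, ZMod.card, Fintype.card_fin]
  set Φ : F × (Fin m → ZMod 2) × ZMod 4 → ((Fin m → ZMod 2) → ZMod 4) :=
    fun p x => dfun (Amul p.1 * W) p.2.1 x + p.2.2 with hΦdef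
  have htr_ne : ∀ β : F, β ≠ 0 → ∃ e : F, Algebra.trace (ZMod 2) F (β * e) ≠ 0 := by
    intro β hβ
    refine ⟨β⁻¹ * c₀, ?_⟩
    rw [← mul_assoc, mul_inv_cancel₀ hβ, one_mul, hc₀]
    exact one_ne_zero
  -- K is the range of Φ
  have hrange : K = Set.range Φ := by
    rw [hK]
    ext c
    simp only [Set.mem_setOf_eq, Set.mem_range]
    constructor
    · rintro ⟨z, w, κ, rfl⟩
      refine ⟨(z, w, κ), ?_⟩
      funext x
      show dfun (Amul z * W) w x + κ = _
      rw [← cast_body]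
    · rintro ⟨⟨z, w, κ⟩, rfl⟩
      refine ⟨z, w, κ, ?_⟩
      funext x
      show dfun (Amul z * W) w x + κ = _
      rw [← cast_body]
  -- Φ is injective
  have hinj : Function.Injective Φ := by
    rintro ⟨z, w, κ⟩ ⟨z', w', κ'⟩ h
    have happ : ∀ x, dfun (Amul z * W) w x + κ = dfun (Amul z' * W) w' x + κ' :=
      fun x => congrFun h x
    have hκ : κ = κ' := by
      have h0 := happ 0
      rw [dfun_zero, dfun_zero, zero_add, zero_add] at h0
      exact h0
    subst hκ
    have hd_eq : ∀ x, dfun (Amul z * W) w x = dfun (Amul z' * W) w' x :=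
      fun x => add_right_cancel (happ x)
    have htrzz : ∀ e : F, Algebra.trace (ZMod 2) F (z * e)
        = Algebra.trace (ZMod 2) F (z' * e) := by
      have hbile : ∀ x u : Fin m → ZMod 2, Algebra.trace (ZMod 2) F (z * X α x * X α u)
          = Algebra.trace (ZMod 2) F (z' * X α x * X α u) := by
        intro x u
        have h1 := hd_eq (x + u)
        rw [dfun_add _ (P_symm α W hW Amul hAmul z) w x u,
            dfun_add _ (P_symm α W hW Amul hAmul z') w' x u, hd_eq x, hd_eq u] at h1
        have h2 := add_left_cancel h1
        rw [bilin α W hW Amul hAmul, bilin α W hW Amul hAmul] at h2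
        exact tl_inj _ _ h2
      intro e
      obtain ⟨x1, hx1⟩ := X_surj α bas hbas 1
      obtain ⟨u1, hu1⟩ := X_surj α bas hbas e
      have h3 := hbile x1 u1
      rw [hx1, hu1, mul_one, mul_one] at h3
      exact h3
    have hz : z = z' := by
      by_contra hne
      obtain ⟨e, he⟩ := htr_ne (z - z') (sub_ne_zero.mpr hne)
      apply he
      rw [sub_mul, map_sub, htrzz e, sub_self]
    subst hz
    have hw : w = w' := by
      funext i
      have h1 := hd_eq (Pi.single i 1)
      rw [dfun, dfun] at h1
      have h2 := add_left_cancel h1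
      have h3 := tl_inj _ _ h2
      rw [wdot_single, wdot_single] at h3
      exact h3
    subst hw
    rfl
  -- counting reduction
  have hcount : ∀ i, Awt i
      = ∑ z : F, ∑ w : Fin m → ZMod 2, ∑ κ : ZMod 4,
          if wt (Φ (z, w, κ)) = i then 1 else 0 := by
    intro i
    rw [hAwt]
    have e : {p : F × (Fin m → ZMod 2) × ZMod 4 // wt (Φ p) = i}
        ≃ {c : (Fin m → ZMod 2) → ZMod 4 // c ∈ K ∧ wt c = i} := by
      refine Equiv.ofBijective
        (fun p => ⟨Φ p.1, ⟨by rw [hrange]; exact Set.mem_range_self _, p.2⟩⟩) ⟨?_, ?_⟩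
      · rintro ⟨p, hp⟩ ⟨q, hq⟩ hpq
        have h1 := congrArg Subtype.val hpq
        exact Subtype.ext (hinj h1)
      · rintro ⟨c, hc, hwtc⟩
        rw [hrange] at hc
        obtain ⟨p, hp⟩ := hc
        exact ⟨⟨p, by rw [hp]; exact hwtc⟩, Subtype.ext hp⟩
    rw [← Nat.card_congr e, Nat.card_eq_fintype_card, Fintype.card_subtype,
      Finset.card_filter, Fintype.sum_prod_type]
    refine Finset.sum_congr rfl fun z _ => ?_
    rw [Fintype.sum_prod_type]
  -- Lee weight via the character
  have hLee : ∀ c : (Fin m → ZMod 2) → ZMod 4,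
      (wt c : ℤ) = 2 ^ m - reHom (∑ x : Fin m → ZMod 2, χ (c x)) := by
    intro c
    have hval : ∀ v : ZMod 4,
        (((if (gray v).1 = 0 then 0 else 1) + (if (gray v).2 = 0 then 0 else 1) : ℕ) : ℤ)
          = 1 - (χ v).re := by
      intro v
      have h4 : ∀ u : ZMod 4, u = 0 ∨ u = 1 ∨ u = 2 ∨ u = 3 := by decide
      rcases h4 v with rfl | rfl | rfl | rfl
      · rw [hgray.1]; decide
      · rw [hgray.2.1]; decide
      · rw [hgray.2.2.1]; decide
      · rw [hgray.2.2.2]; decide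
    rw [hwt c, Nat.cast_sum]
    simp only [hval]
    rw [Finset.sum_sub_distrib, Finset.sum_const, Finset.card_univ, hcardV, map_sum]
    simp only [reHom_apply, nsmul_eq_mul, mul_one]
    push_cast
    ring
  have hwtΦ : ∀ (z : F) (w : Fin m → ZMod 2) (κ : ZMod 4),
      (wt (Φ (z, w, κ)) : ℤ)
        = 2 ^ m - ((∑ x : Fin m → ZMod 2, χ (dfun (Amul z * W) w x)) * χ κ).re := by
    intro z w κ
    rw [hLee]
    congr 1
    have h1 : ∀ x, χ (Φ (z, w, κ) x) = χ (dfun (Amul z * W) w x) * χ κ :=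
      fun x => χ_add _ _
    simp only [h1]
    rw [← Finset.sum_mul]
    rfl
  have hnat : ∀ (c : (Fin m → ZMod 2) → ZMod 4) (n : ℕ),
      (wt c : ℤ) = (n : ℤ) → wt c = n := fun c n h => Nat.cast_injective h
  -- basic numeric facts
  have hale : 2 ^ k ≤ 2 ^ m := Nat.pow_le_pow_right (by norm_num) (by omega)
  have haltb : 2 ^ k < 2 ^ m := Nat.pow_lt_pow_right (by norm_num) (by omega)
  have h1a : 1 ≤ 2 ^ k := Nat.one_le_two_pow
  have h1b : 1 ≤ 2 ^ m := Nat.one_le_two_pow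
  have hc1 : ((2 ^ m - 2 ^ k : ℕ) : ℤ) = 2 ^ m - 2 ^ k := by
    rw [Nat.cast_sub hale]; push_cast; ring
  have hc2 : ((2 ^ m + 2 ^ k : ℕ) : ℤ) = 2 ^ m + 2 ^ k := by push_cast; ring
  -- block count for z ≠ 0
  have hSz : ∀ z : F, z ≠ 0 → ∀ (w : Fin m → ZMod 2) (i : ℕ),
      (∑ κ : ZMod 4, if wt (Φ (z, w, κ)) = i then 1 else 0)
        = 2 * (if 2 ^ m - 2 ^ k = i then 1 else 0)
          + 2 * (if 2 ^ m + 2 ^ k = i then 1 else 0) := by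
    intro z hz w i
    set S := ∑ x : Fin m → ZMod 2, χ (dfun (Amul z * W) w x) with hSdef
    have hnorm : S * star S = ((2 ^ m : ℕ) : GaussianInt) := by
      apply gauss_norm (dfun (Amul z * W) w)
        (fun u y => Algebra.trace (ZMod 2) F (z * X α u * X α y))
      · exact dfun_zero _ _
      · intro y u
        rw [dfun_add _ (P_symm α W hW Amul hAmul z) w y u, bilin α W hW Amul hAmul z y u]
        congr 2
        ring
      · intro u y y'
        rw [X_add, mul_add, map_add]
      · intro y
        rw [X_zero, mul_zero, zero_mul, map_zero]
      · intro u hu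
        have hXu : X α u ≠ 0 := fun hh => hu (X_inj α bas hbas (by rw [hh, X_zero]))
        obtain ⟨e, he⟩ := htr_ne (z * X α u) (mul_ne_zero hz hXu)
        obtain ⟨y, hy⟩ := X_surj α bas hbas e
        exact ⟨y, by rw [hy]; exact he⟩
    have hre2 : S.re ^ 2 + S.im ^ 2 = 2 ^ (2 * k + 1) := by
      have h := congrArg Zsqrtd.re hnorm
      simp only [Zsqrtd.re_mul, Zsqrtd.re_star, Zsqrtd.im_star, Zsqrtd.re_natCast] at h
      push_cast at h
      rw [← hk] at *
      nlinarith [h]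
    obtain ⟨hre, him⟩ := two_squares_pow k S.re S.im hre2
    rw [zmod4_sum (fun κ => if wt (Φ (z, w, κ)) = i then 1 else 0)]
    have e0 : (wt (Φ (z, w, 0)) : ℤ) = 2 ^ m - S.re := by rw [hwtΦ, ← hSdef, re_χ0]
    have e1 : (wt (Φ (z, w, 1)) : ℤ) = 2 ^ m + S.im := by rw [hwtΦ, ← hSdef, re_χ1]; ring
    have e2 : (wt (Φ (z, w, 2)) : ℤ) = 2 ^ m + S.re := by rw [hwtΦ, ← hSdef, re_χ2]; ring
    have e3 : (wt (Φ (z, w, 3)) : ℤ) = 2 ^ m - S.im := by rw [hwtΦ, ← hSdef, re_χ3]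
    rcases hre with hre | hre <;> rcases him with him | him
    · rw [hnat _ (2 ^ m - 2 ^ k) (by rw [e0, hre, hc1]),
          hnat _ (2 ^ m + 2 ^ k) (by rw [e1, him, hc2]),
          hnat _ (2 ^ m + 2 ^ k) (by rw [e2, hre, hc2]),
          hnat _ (2 ^ m - 2 ^ k) (by rw [e3, him, hc1])]
      ring
    · rw [hnat _ (2 ^ m - 2 ^ k) (by rw [e0, hre, hc1]),
          hnat _ (2 ^ m - 2 ^ k) (by rw [e1, him, hc1]; ring),
          hnat _ (2 ^ m + 2 ^ k) (by rw [e2, hre, hc2]),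
          hnat _ (2 ^ m + 2 ^ k) (by rw [e3, him, hc2]; ring)]
      ring
    · rw [hnat _ (2 ^ m + 2 ^ k) (by rw [e0, hre, hc2]; ring),
          hnat _ (2 ^ m + 2 ^ k) (by rw [e1, him, hc2]),
          hnat _ (2 ^ m - 2 ^ k) (by rw [e2, hre, hc1]; ring),
          hnat _ (2 ^ m - 2 ^ k) (by rw [e3, him, hc1])]
      ring
    · rw [hnat _ (2 ^ m + 2 ^ k) (by rw [e0, hre, hc2]; ring),
          hnat _ (2 ^ m - 2 ^ k) (by rw [e1, him, hc1]; ring),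
          hnat _ (2 ^ m - 2 ^ k) (by rw [e2, hre, hc1]; ring),
          hnat _ (2 ^ m + 2 ^ k) (by rw [e3, him, hc2]; ring)]
      ring
  -- z = 0 : the quadratic part vanishes
  have hP0 : ∀ i j, (Amul (0 : F) * W) i j = 0 := by
    intro i j
    rw [P_form α W hW Amul hAmul, zero_mul, map_zero]
  -- z = 0, w = 0 block
  have hS00 : (∑ x : Fin m → ZMod 2, χ (dfun (Amul (0 : F) * W) 0 x))
      = ((2 ^ m : ℕ) : GaussianInt) := by
    have hd00 : ∀ x, dfun (Amul (0 : F) * W) (0 : Fin m → ZMod 2) x = 0 := by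
      intro x
      rw [dfun, QQ_of_zero_matrix _ hP0, zero_add]
      have hq : (∑ i, (0 : Fin m → ZMod 2) i * x i) = 0 := by simp
      rw [hq, map_zero]
    simp only [hd00, χ_zero]
    rw [Finset.sum_const, Finset.card_univ, hcardV, nsmul_eq_mul, mul_one]
  have hblk00 : ∀ i : ℕ,
      (∑ κ : ZMod 4, if wt (Φ ((0 : F), (0 : Fin m → ZMod 2), κ)) = i then 1 else 0)
        = (if 0 = i then 1 else 0) + (if 2 ^ (m + 1) = i then 1 else 0)
          + 2 * (if 2 ^ m = i then 1 else 0) := by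
    intro i
    rw [zmod4_sum (fun κ => if wt (Φ ((0 : F), (0 : Fin m → ZMod 2), κ)) = i then 1 else 0)]
    have e0 : wt (Φ ((0 : F), (0 : Fin m → ZMod 2), 0)) = 0 := by
      apply hnat
      rw [hwtΦ, hS00, re_χ0, Zsqrtd.re_natCast]
      push_cast; ring
    have e1 : wt (Φ ((0 : F), (0 : Fin m → ZMod 2), 1)) = 2 ^ m := by
      apply hnat
      rw [hwtΦ, hS00, re_χ1, Zsqrtd.im_natCast]
      push_cast; ring
    have e2 : wt (Φ ((0 : F), (0 : Fin m → ZMod 2), 2)) = 2 ^ (m + 1) := by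
      apply hnat
      rw [hwtΦ, hS00, re_χ2, Zsqrtd.re_natCast]
      push_cast; ring
    have e3 : wt (Φ ((0 : F), (0 : Fin m → ZMod 2), 3)) = 2 ^ m := by
      apply hnat
      rw [hwtΦ, hS00, re_χ3, Zsqrtd.im_natCast]
      push_cast; ring
    rw [e0, e1, e2, e3]
    ring
  -- z = 0, w ≠ 0 block
  have hblkw : ∀ w : Fin m → ZMod 2, w ≠ 0 → ∀ κ : ZMod 4,
      wt (Φ ((0 : F), w, κ)) = 2 ^ m := by
    intro w hwne κ
    have hS0w : (∑ x : Fin m → ZMod 2, χ (dfun (Amul (0 : F) * W) w x)) = 0 := by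
      have hdw : ∀ x, dfun (Amul (0 : F) * W) w x = tl (∑ i, w i * x i) := by
        intro x
        rw [dfun, QQ_of_zero_matrix _ hP0, zero_add]
      simp only [hdw]
      obtain ⟨i0, hi0⟩ := Function.ne_iff.mp hwne
      apply sum_char_eq_zero (fun x => ∑ i, w i * x i)
      · intro x y
        rw [← Finset.sum_add_distrib]
        exact Finset.sum_congr rfl fun i _ => by rw [Pi.add_apply, mul_add]
      · show (∑ i, w i * (Pi.single i0 1 : Fin m → ZMod 2) i) ≠ 0
        rw [wdot_single]
        simpa using hi0
    apply hnat
    rw [hwtΦ, hS0w, zero_mul, Zsqrtd.re_zero]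
    push_cast; ring
  -- the master formula
  have hmain : ∀ i, Awt i
      = ((if 0 = i then 1 else 0) + (if 2 ^ (m + 1) = i then 1 else 0)
          + 2 * (if 2 ^ m = i then 1 else 0)
          + (2 ^ m - 1) * (4 * (if 2 ^ m = i then 1 else 0)))
        + (2 ^ m - 1) * (2 ^ m * (2 * (if 2 ^ m - 2 ^ k = i then 1 else 0)
          + 2 * (if 2 ^ m + 2 ^ k = i then 1 else 0))) := by
    intro i
    rw [hcount i]
    rw [← Finset.add_sum_erase _ _ (Finset.mem_univ (0 : F))]
    congr 1
    · -- z = 0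
      rw [← Finset.add_sum_erase _ _ (Finset.mem_univ (0 : Fin m → ZMod 2))]
      congr 1
      · exact hblk00 i
      · rw [Finset.sum_congr rfl (fun w hw => ?_)]
        · rw [Finset.sum_const, Finset.card_erase_of_mem (Finset.mem_univ _),
            Finset.card_univ, hcardV, smul_eq_mul]
        · have hwne : w ≠ 0 := Finset.ne_of_mem_erase hw
          rw [zmod4_sum (fun κ => if wt (Φ ((0 : F), w, κ)) = i then 1 else 0)]
          rw [hblkw w hwne 0, hblkw w hwne 1, hblkw w hwne 2, hblkw w hwne 3]
          ring
    · -- z ≠ 0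
      rw [Finset.sum_congr rfl (fun z hz => ?_)]
      · rw [Finset.sum_const, Finset.card_erase_of_mem (Finset.mem_univ _),
          Finset.card_univ, hcardF, smul_eq_mul]
      · have hzne : z ≠ 0 := Finset.ne_of_mem_erase hz
        rw [Finset.sum_congr rfl (fun w _ => hSz z hzne w i)]
        rw [Finset.sum_const, Finset.card_univ, hcardV, smul_eq_mul]
  -- numeric distinctness
  have hne1 : 2 ^ (m + 1) ≠ 0 := (Nat.pow_pos (by norm_num)).ne'
  have hne2 : 2 ^ m ≠ 0 := (Nat.pow_pos (by norm_num)).ne'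
  have hmlt : 2 ^ m < 2 ^ (m + 1) := Nat.pow_lt_pow_right (by norm_num) (by omega)
  have hsubne : 2 ^ m - 2 ^ k ≠ 0 := Nat.sub_ne_zero_of_lt haltb
  have hsublt : 2 ^ m - 2 ^ k < 2 ^ m := Nat.sub_lt (by omega) (by omega)
  have haddgt : 2 ^ m < 2 ^ m + 2 ^ k := by omega
  have haddlt : 2 ^ m + 2 ^ k < 2 ^ (m + 1) := by
    have : 2 ^ (m + 1) = 2 ^ m + 2 ^ m := by ring
    omega
  have hp2 : 2 ^ (m + 2) = 4 * 2 ^ m := by ring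
  have hp1 : 2 ^ (m + 1) = 2 * 2 ^ m := by ring
  have hp3 : 2 ^ (2 * m + 1) = 2 * (2 ^ m * 2 ^ m) := by
    rw [pow_succ, two_mul, pow_add]
    ring
  refine ⟨?_, ?_, ?_, ?_, ?_, ?_⟩
  · rw [hmain 0]
    rw [if_pos rfl, if_neg hne1, if_neg hne2, if_neg hsubne,
      if_neg (by omega : ¬ 2 ^ m + 2 ^ k = 0)]
    simp
  · rw [hmain (2 ^ (m + 1))]
    rw [if_neg (by omega : ¬ (0 : ℕ) = 2 ^ (m + 1)), if_pos rfl,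
      if_neg (by omega : ¬ 2 ^ m = 2 ^ (m + 1)),
      if_neg (by omega : ¬ 2 ^ m - 2 ^ k = 2 ^ (m + 1)),
      if_neg (by omega : ¬ 2 ^ m + 2 ^ k = 2 ^ (m + 1))]
    simp
  · rw [hmain (2 ^ m)]
    rw [if_neg (by omega : ¬ (0 : ℕ) = 2 ^ m), if_neg (by omega : ¬ 2 ^ (m + 1) = 2 ^ m),
      if_pos rfl, if_neg (by omega : ¬ 2 ^ m - 2 ^ k = 2 ^ m),
      if_neg (by omega : ¬ 2 ^ m + 2 ^ k = 2 ^ m)]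
    rw [hp2]
    generalize 2 ^ m = b at h1b ⊢
    ring_nf
    omega
  · rw [hmain (2 ^ m - 2 ^ k)]
    rw [if_neg (by omega : ¬ (0 : ℕ) = 2 ^ m - 2 ^ k),
      if_neg (by omega : ¬ 2 ^ (m + 1) = 2 ^ m - 2 ^ k),
      if_neg (by omega : ¬ 2 ^ m = 2 ^ m - 2 ^ k), if_pos rfl,
      if_neg (by omega : ¬ 2 ^ m + 2 ^ k = 2 ^ m - 2 ^ k)]
    rw [hp3, hp1]
    have key : (2 ^ m - 1) * (2 ^ m * (2 * 1 + 2 * 0)) = 2 * (2 ^ m * 2 ^ m) - 2 * 2 ^ m := by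
      rw [Nat.sub_mul, one_mul]
      congr 1 <;> ring
    rw [key]
    simp
  · rw [hmain (2 ^ m + 2 ^ k)]
    rw [if_neg (by omega : ¬ (0 : ℕ) = 2 ^ m + 2 ^ k),
      if_neg (by omega : ¬ 2 ^ (m + 1) = 2 ^ m + 2 ^ k),
      if_neg (by omega : ¬ 2 ^ m = 2 ^ m + 2 ^ k),
      if_neg (by omega : ¬ 2 ^ m - 2 ^ k = 2 ^ m + 2 ^ k), if_pos rfl]
    rw [hp3, hp1]
    have key : (2 ^ m - 1) * (2 ^ m * (2 * 0 + 2 * 1)) = 2 * (2 ^ m * 2 ^ m) - 2 * 2 ^ m := by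
      rw [Nat.sub_mul, one_mul]
      congr 1 <;> ring
    rw [key]
    simp
  · intro i hi0 hi1 hi2 hi3 hi4
    rw [hmain i]
    rw [if_neg (fun h => hi0 h.symm), if_neg (fun h => hi1 h.symm),
      if_neg (fun h => hi2 h.symm), if_neg (fun h => hi3 h.symm),
      if_neg (fun h => hi4 h.symm)]
    simp
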